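/- arXiv:0907.5398 — 5 statements merged into one kernel-verified Lean document; each statement's English description precedes it below -/
import Mathlib

section
/- Let a, b ∈ ℂ with a ≠ 0 and b ≠ 0, and let F : ℂ → ℂ be the cosine map F(z) = a·e^z + b·e^{−z}. Then F has no finite asymptotic value: there is no w ∈ ℂ for which there exists a continuous curve γ : [0,∞) → ℂ with |γ(t)| → ∞ and F(γ(t)) → w as t → ∞. -/
open Complex Filter

private lemma exp_add_int_two_pi (x : ℂ) (k : ℤ) :
    Complex.exp (x + ((2 * Real.pi * (k : ℝ) : ℝ) : ℂ) * I) = Complex.exp x := by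
  rw [Complex.exp_add]
  have h : ((2 * Real.pi * (k : ℝ) : ℝ) : ℂ) * I = (k : ℂ) * (2 * (Real.pi : ℂ) * I) := by
    push_cast; ring
  rw [h, Complex.exp_int_mul_two_pi_mul_I, mul_one]

private lemma re_bound_of_abs_le (a b : ℂ) (ha : a ≠ 0) (hb : b ≠ 0) (C : ℝ) (hC : 0 ≤ C)
    (z : ℂ) (hz : ‖a * Complex.exp z + b * Complex.exp (-z)‖ ≤ C) :
    |z.re| ≤ max (Real.log ((C + ‖b‖) / ‖a‖))
      (Real.log ((C + ‖a‖) / ‖b‖)) := by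
  have hA : 0 < ‖a‖ := norm_pos_iff.mpr ha
  have hB : 0 < ‖b‖ := norm_pos_iff.mpr hb
  have habs1 : ‖a * Complex.exp z‖ = ‖a‖ * Real.exp z.re := by
    rw [norm_mul, Complex.norm_exp]
  have habs2 : ‖b * Complex.exp (-z)‖ = ‖b‖ * Real.exp (-z.re) := by
    rw [norm_mul, Complex.norm_exp, Complex.neg_re]
  rcases le_or_gt 0 z.re with h | h
  · have h1 : ‖a * Complex.exp z‖ ≤
        ‖a * Complex.exp z + b * Complex.exp (-z)‖ +
          ‖b * Complex.exp (-z)‖ := by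
      have := norm_add_le (a * Complex.exp z + b * Complex.exp (-z))
        (-(b * Complex.exp (-z)))
      simpa using this
    have hexp : Real.exp (-z.re) ≤ 1 := Real.exp_le_one_iff.mpr (by linarith)
    have h2 : ‖a‖ * Real.exp z.re ≤ C + ‖b‖ := by
      rw [habs1] at h1; rw [habs2] at h1
      nlinarith [hB.le, Real.exp_pos (-z.re)]
    have h3 : Real.exp z.re ≤ (C + ‖b‖) / ‖a‖ := by
      rw [le_div_iff₀ hA]; linarith
    have h4 : z.re ≤ Real.log ((C + ‖b‖) / ‖a‖) := by
      have := Real.log_le_log (Real.exp_pos z.re) h3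
      rwa [Real.log_exp] at this
    rw [_root_.abs_of_nonneg h]
    exact le_max_of_le_left h4
  · have h1 : ‖b * Complex.exp (-z)‖ ≤
        ‖a * Complex.exp z + b * Complex.exp (-z)‖ +
          ‖a * Complex.exp z‖ := by
      have := norm_add_le (a * Complex.exp z + b * Complex.exp (-z))
        (-(a * Complex.exp z))
      simpa [add_comm] using this
    have hexp : Real.exp z.re ≤ 1 := Real.exp_le_one_iff.mpr h.le
    have h2 : ‖b‖ * Real.exp (-z.re) ≤ C + ‖a‖ := by
      rw [habs1] at h1; rw [habs2] at h1
      nlinarith [hA.le, Real.exp_pos z.re]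
    have h3 : Real.exp (-z.re) ≤ (C + ‖a‖) / ‖b‖ := by
      rw [le_div_iff₀ hB]; linarith
    have h4 : -z.re ≤ Real.log ((C + ‖a‖) / ‖b‖) := by
      have := Real.log_le_log (Real.exp_pos (-z.re)) h3
      rwa [Real.log_exp] at this
    rw [_root_.abs_of_neg h]
    exact le_max_of_le_right h4

private lemma exists_angle_sol (a b w : ℂ) (γ : ℝ → ℂ)
    (hγ : ContinuousOn γ (Set.Ici 0)) (M : ℝ)
    (T₀ : ℝ) (hT₀ : ∀ t ≥ T₀, |(γ t).re| ≤ M)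
    (him : Tendsto (fun t => (γ t).im) atTop atTop)
    (hw : Tendsto (fun t => a * Complex.exp (γ t) + b * Complex.exp (-(γ t))) atTop (nhds w))
    (θ : ℝ) :
    ∃ s : ℝ, s ∈ Set.Icc (-M) M ∧
      a * Complex.exp (s : ℂ) * Complex.exp ((θ : ℂ) * I) +
        b * Complex.exp (-(s : ℂ)) * Complex.exp (-((θ : ℂ) * I)) = w := by
  have hcim : ContinuousOn (fun t => (γ t).im) (Set.Ici 0) :=
    Complex.continuous_im.comp_continuousOn hγ
  -- for each n, find a time t ≥ n with im ≡ θ mod 2π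
  have main : ∀ n : ℕ, ∃ t : ℝ, (n : ℝ) ≤ t ∧ T₀ ≤ t ∧ 0 ≤ t ∧
      ∃ k : ℤ, (γ t).im = θ + 2 * Real.pi * k := by
    intro n
    set T : ℝ := max (max T₀ 0) (n : ℝ) with hT
    have hT0 : (0 : ℝ) ≤ T := le_trans (le_max_right _ _) (le_max_left _ _)
    have hTT₀ : T₀ ≤ T := le_trans (le_max_left _ _) (le_max_left _ _)
    have hTn : (n : ℝ) ≤ T := le_max_right _ _
    set y₀ : ℝ := (γ T).im with hy₀
    set k : ℤ := ⌈(y₀ - θ) / (2 * Real.pi)⌉ with hk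
    set y : ℝ := θ + 2 * Real.pi * k with hy
    have hpi : (0 : ℝ) < 2 * Real.pi := by positivity
    have hyy₀ : y₀ ≤ y := by
      have h1 : (y₀ - θ) / (2 * Real.pi) ≤ (k : ℝ) := Int.le_ceil _
      have h2 : y₀ - θ ≤ 2 * Real.pi * k := by
        rw [div_le_iff₀ hpi] at h1; linarith
      simp only [hy]; linarith
    obtain ⟨s, hsT, hsy⟩ : ∃ s, T ≤ s ∧ y ≤ (γ s).im := by
      have h1 : ∀ᶠ t in atTop, y ≤ (γ t).im := him.eventually_ge_atTop y
      have h2 : ∀ᶠ t in atTop, T ≤ t := eventually_ge_atTop T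
      obtain ⟨s, hs1, hs2⟩ := (h2.and h1).exists
      exact ⟨s, hs1, hs2⟩
    have hsub : Set.Icc T s ⊆ Set.Ici (0 : ℝ) := fun x hx => le_trans hT0 hx.1
    have hIVT := intermediate_value_Icc hsT (hcim.mono hsub)
    have hymem : y ∈ Set.Icc (γ T).im (γ s).im := ⟨hyy₀, hsy⟩
    obtain ⟨t, ht, hty⟩ := hIVT hymem
    exact ⟨t, le_trans hTn ht.1, le_trans hTT₀ ht.1, le_trans hT0 ht.1, k, hty⟩
  choose t htn htT₀ ht0 hk using main
  choose k hkeq using hk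
  have httop : Tendsto t atTop atTop :=
    tendsto_atTop_mono htn tendsto_natCast_atTop_atTop
  -- the values lie in a compact set
  set g : ℝ → ℂ := fun s =>
    a * Complex.exp (s : ℂ) * Complex.exp ((θ : ℂ) * I) +
      b * Complex.exp (-(s : ℂ)) * Complex.exp (-((θ : ℂ) * I)) with hg
  have hgc : Continuous g := by
    apply Continuous.add <;> apply Continuous.mul <;> fun_prop
  have hKc : IsCompact (g '' Set.Icc (-M) M) := (isCompact_Icc).image hgc
  have hmem : ∀ n : ℕ, a * Complex.exp (γ (t n)) + b * Complex.exp (-(γ (t n))) ∈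
      g '' Set.Icc (-M) M := by
    intro n
    refine ⟨(γ (t n)).re, ?_, ?_⟩
    · have := hT₀ (t n) (htT₀ n)
      exact abs_le.mp this
    · have hz : γ (t n) = ((γ (t n)).re : ℂ) + ((γ (t n)).im : ℂ) * I :=
        (Complex.re_add_im _).symm
      have h1 : Complex.exp (γ (t n)) =
          Complex.exp (((γ (t n)).re : ℂ)) * Complex.exp ((θ : ℂ) * I) := by
        conv_lhs => rw [hz]
        rw [hkeq n]
        have harg : (((θ + 2 * Real.pi * (k n) : ℝ)) : ℂ) * I =
            ((θ : ℂ) * I) + ((2 * Real.pi * ((k n : ℤ) : ℝ) : ℝ) : ℂ) * I := by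
          push_cast; ring
        rw [harg, ← add_assoc, exp_add_int_two_pi, Complex.exp_add]
      have h2 : Complex.exp (-(γ (t n))) =
          Complex.exp (-(((γ (t n)).re : ℂ))) * Complex.exp (-((θ : ℂ) * I)) := by
        conv_lhs => rw [hz]
        rw [hkeq n]
        have harg : -((((γ (t n)).re : ℂ)) + (((θ + 2 * Real.pi * (k n) : ℝ)) : ℂ) * I) =
            (-(((γ (t n)).re : ℂ)) + -((θ : ℂ) * I)) +
              ((2 * Real.pi * ((-(k n) : ℤ) : ℝ) : ℝ) : ℂ) * I := by
          push_cast; ring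
        rw [harg, exp_add_int_two_pi, Complex.exp_add]
      rw [hg]
      simp only
      rw [h1, h2]; ring
  have hconv : Tendsto (fun n : ℕ =>
      a * Complex.exp (γ (t n)) + b * Complex.exp (-(γ (t n)))) atTop (nhds w) :=
    hw.comp httop
  have hwmem : w ∈ g '' Set.Icc (-M) M :=
    hKc.isClosed.mem_of_tendsto hconv (Filter.Eventually.of_forall hmem)
  obtain ⟨s, hs, hgs⟩ := hwmem
  exact ⟨s, hs, hgs⟩

private lemma no_asymp_aux (a b w : ℂ) (ha : a ≠ 0) (hb : b ≠ 0) (γ : ℝ → ℂ)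
    (hγ : ContinuousOn γ (Set.Ici 0)) (M : ℝ)
    (T₀ : ℝ) (hT₀ : ∀ t ≥ T₀, |(γ t).re| ≤ M)
    (him : Tendsto (fun t => (γ t).im) atTop atTop)
    (hw : Tendsto (fun t => a * Complex.exp (γ t) + b * Complex.exp (-(γ t))) atTop (nhds w)) :
    False := by
  obtain ⟨s₀, _, e₀⟩ := exists_angle_sol a b w γ hγ M T₀ hT₀ him hw 0
  obtain ⟨s₂, _, e₂⟩ := exists_angle_sol a b w γ hγ M T₀ hT₀ him hw Real.pi
  obtain ⟨s₁, _, e₁⟩ := exists_angle_sol a b w γ hγ M T₀ hT₀ him hw (Real.pi / 2)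
  obtain ⟨s₃, _, e₃⟩ := exists_angle_sol a b w γ hγ M T₀ hT₀ him hw (-(Real.pi / 2))
  -- simplify the angle factors
  have key : ∀ x : ℝ, Complex.exp ((x : ℂ) * I) =
      ((Real.cos x : ℝ) : ℂ) + ((Real.sin x : ℝ) : ℂ) * I := by
    intro x
    rw [Complex.exp_mul_I, ← Complex.ofReal_cos, ← Complex.ofReal_sin]
  have keyneg : ∀ x : ℝ, Complex.exp (-((x : ℂ) * I)) =
      ((Real.cos x : ℝ) : ℂ) - ((Real.sin x : ℝ) : ℂ) * I := by
    intro x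
    have h : -((x : ℂ) * I) = ((-x : ℝ) : ℂ) * I := by push_cast; ring
    rw [h, key]
    push_cast [Real.cos_neg, Real.sin_neg]
    ring
  have E0 : Complex.exp (((0 : ℝ) : ℂ) * I) = 1 := by rw [key]; simp
  have E0n : Complex.exp (-(((0 : ℝ) : ℂ) * I)) = 1 := by rw [keyneg]; simp
  have Epi : Complex.exp (((Real.pi : ℝ) : ℂ) * I) = -1 := by rw [key]; simp
  have Epin : Complex.exp (-(((Real.pi : ℝ) : ℂ) * I)) = -1 := by rw [keyneg]; simp
  have Eh : Complex.exp (((Real.pi / 2 : ℝ) : ℂ) * I) = I := by rw [key]; simp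
  have Ehn : Complex.exp (-(((Real.pi / 2 : ℝ) : ℂ) * I)) = -I := by rw [keyneg]; simp
  have Eh3 : Complex.exp (((-(Real.pi / 2) : ℝ) : ℂ) * I) = -I := by rw [key]; simp
  have Eh3n : Complex.exp (-(((-(Real.pi / 2) : ℝ) : ℂ) * I)) = I := by rw [keyneg]; simp
  rw [E0, E0n, mul_one, mul_one] at e₀
  rw [Epi, Epin] at e₂
  rw [Eh, Ehn] at e₁
  rw [Eh3, Eh3n] at e₃
  have hc : ∀ s : ℝ, Complex.exp (s : ℂ) = ((Real.exp s : ℝ) : ℂ) := fun s =>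
    (Complex.ofReal_exp s).symm
  have hcn : ∀ s : ℝ, Complex.exp (-(s : ℂ)) = ((Real.exp (-s) : ℝ) : ℂ) := fun s => by
    rw [← Complex.ofReal_neg, ← Complex.ofReal_exp]
  rw [hc, hcn] at e₀ e₂ e₁ e₃
  have h1 : a * ((Real.exp s₀ + Real.exp s₂ : ℝ) : ℂ) +
      b * ((Real.exp (-s₀) + Real.exp (-s₂) : ℝ) : ℂ) = 0 := by
    push_cast at e₀ e₂ ⊢
    linear_combination e₀ - e₂
  have h2 : I * (a * ((Real.exp s₁ + Real.exp s₃ : ℝ) : ℂ) -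
      b * ((Real.exp (-s₁) + Real.exp (-s₃) : ℝ) : ℂ)) = 0 := by
    push_cast at e₁ e₃ ⊢
    linear_combination e₁ - e₃
  have h2' : a * ((Real.exp s₁ + Real.exp s₃ : ℝ) : ℂ) -
      b * ((Real.exp (-s₁) + Real.exp (-s₃) : ℝ) : ℂ) = 0 := by
    rcases mul_eq_zero.mp h2 with h | h
    · exact absurd h Complex.I_ne_zero
    · exact h
  have h3 : a * (((Real.exp s₀ + Real.exp s₂) * (Real.exp (-s₁) + Real.exp (-s₃)) +
      (Real.exp s₁ + Real.exp s₃) * (Real.exp (-s₀) + Real.exp (-s₂)) : ℝ) : ℂ) = 0 := by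
    push_cast at h1 h2' ⊢
    linear_combination (Complex.exp (-(s₁ : ℂ)) + Complex.exp (-(s₃ : ℂ))) * h1 +
      (Complex.exp (-(s₀ : ℂ)) + Complex.exp (-(s₂ : ℂ))) * h2'
  rcases mul_eq_zero.mp h3 with h | h
  · exact ha h
  · have h' : (Real.exp s₀ + Real.exp s₂) * (Real.exp (-s₁) + Real.exp (-s₃)) +
        (Real.exp s₁ + Real.exp s₃) * (Real.exp (-s₀) + Real.exp (-s₂)) = 0 := by
      exact_mod_cast h
    nlinarith [Real.exp_pos s₀, Real.exp_pos s₂, Real.exp_pos s₁, Real.exp_pos s₃,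
      Real.exp_pos (-s₀), Real.exp_pos (-s₂), Real.exp_pos (-s₁), Real.exp_pos (-s₃)]

/-- The cosine map `F(z) = a·e^z + b·e^{-z}` with `a, b ≠ 0` has no finite
asymptotic value: there is no `w ∈ ℂ` together with a continuous curve
`γ : [0,∞) → ℂ` with `|γ(t)| → ∞` and `F(γ(t)) → w` as `t → ∞`. -/
theorem cosine_map_no_asymptotic_values (a b : ℂ) (ha : a ≠ 0) (hb : b ≠ 0)
    (F : ℂ → ℂ) (hF : ∀ z, F z = a * Complex.exp z + b * Complex.exp (-z)) :
    ¬ ∃ (w : ℂ) (γ : ℝ → ℂ), ContinuousOn γ (Set.Ici 0) ∧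
      Tendsto (fun t => ‖γ t‖) atTop atTop ∧
      Tendsto (fun t => F (γ t)) atTop (nhds w) := by
  rintro ⟨w, γ, hγc, hγi, hγw⟩
  simp only [hF] at hγw
  -- eventual bound on |F(γ t)|
  set C : ℝ := ‖w‖ + 1 with hC
  have hC0 : 0 ≤ C := by positivity
  have habs : Tendsto (fun t => ‖a * Complex.exp (γ t) + b * Complex.exp (-(γ t))‖)
      atTop (nhds (‖w‖)) := (continuous_norm.tendsto w).comp hγw
  have hev : ∀ᶠ t in atTop,
      ‖a * Complex.exp (γ t) + b * Complex.exp (-(γ t))‖ ≤ C :=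
    (habs.eventually_lt_const (lt_add_one _)).mono fun t ht => ht.le
  set M : ℝ := max (Real.log ((C + ‖b‖) / ‖a‖))
      (Real.log ((C + ‖a‖) / ‖b‖)) with hM
  have hre : ∀ᶠ t in atTop, |(γ t).re| ≤ M :=
    hev.mono fun t ht => re_bound_of_abs_le a b ha hb C hC0 (γ t) ht
  -- |im| tends to infinity
  have himabs : Tendsto (fun t => |(γ t).im|) atTop atTop := by
    apply tendsto_atTop_mono' atTop (f₁ := fun t => ‖γ t‖ - M)
    · filter_upwards [hre] with t ht
      have := Complex.norm_le_abs_re_add_abs_im (γ t)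
      linarith
    · exact tendsto_atTop_add_const_right atTop (-M) hγi
  -- eventual sign of im
  have him1 : ∀ᶠ t in atTop, 1 ≤ |(γ t).im| := himabs.eventually_ge_atTop 1
  obtain ⟨T₁, hT₁⟩ := eventually_atTop.mp
    ((him1.and hre).and (eventually_ge_atTop (0 : ℝ)))
  set T : ℝ := max T₁ 0 with hT
  have hTprop : ∀ t ≥ T, (1 ≤ |(γ t).im| ∧ |(γ t).re| ≤ M) ∧ 0 ≤ t := fun t ht =>
    hT₁ t (le_trans (le_max_left _ _) ht)
  have hcim : ContinuousOn (fun t => (γ t).im) (Set.Ici 0) :=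
    Complex.continuous_im.comp_continuousOn hγc
  have hsign : (∀ t ≥ T, 0 < (γ t).im) ∨ (∀ t ≥ T, (γ t).im < 0) := by
    by_contra hcon
    push_neg at hcon
    obtain ⟨⟨t₁, ht₁T, ht₁⟩, t₂, ht₂T, ht₂⟩ := hcon
    have h1 : (γ t₁).im ≤ 0 := ht₁
    have h2 : 0 ≤ (γ t₂).im := ht₂
    have hsub : Set.uIcc t₁ t₂ ⊆ Set.Ici (0 : ℝ) := by
      intro x hx
      have hmin : T ≤ min t₁ t₂ := le_min ht₁T ht₂T
      have h0T : (0 : ℝ) ≤ T := le_max_right _ _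
      exact le_trans (le_trans h0T hmin) hx.1
    have hIVT := intermediate_value_uIcc (hcim.mono hsub)
    have h0mem : (0 : ℝ) ∈ Set.uIcc (γ t₁).im (γ t₂).im := Set.mem_uIcc.mpr (Or.inl ⟨h1, h2⟩)
    obtain ⟨t₀, ht₀, ht₀0⟩ := hIVT h0mem
    have ht₀T : T ≤ t₀ := le_trans (le_min ht₁T ht₂T) ht₀.1
    have ht₀0' : (γ t₀).im = 0 := ht₀0
    have := (hTprop t₀ ht₀T).1.1
    rw [ht₀0'] at this
    norm_num at this
  have hTself : T ≤ T := le_refl T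
  rcases hsign with hpos | hneg
  · -- im → +∞
    have himtop : Tendsto (fun t => (γ t).im) atTop atTop := by
      apply himabs.congr'
      filter_upwards [eventually_ge_atTop T] with t ht
      exact abs_of_pos (hpos t ht)
    exact no_asymp_aux a b w ha hb γ hγc M T
      (fun t ht => (hTprop t ht).1.2) himtop hγw
  · -- im → -∞ : pass to the conjugate curve
    set γ' : ℝ → ℂ := fun t => (starRingEnd ℂ) (γ t) with hγ'
    have hγ'c : ContinuousOn γ' (Set.Ici 0) :=
      (Complex.continuous_conj).comp_continuousOn hγc
    have him' : Tendsto (fun t => (γ' t).im) atTop atTop := by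
      have : (fun t => (γ' t).im) = fun t => -(γ t).im := by
        funext t; simp [hγ', Complex.conj_im]
      rw [this]
      apply himabs.congr'
      filter_upwards [eventually_ge_atTop T] with t ht
      rw [abs_of_neg (hneg t ht)]
    have hre' : ∀ t ≥ T, |(γ' t).re| ≤ M := by
      intro t ht
      have : (γ' t).re = (γ t).re := by simp [hγ', Complex.conj_re]
      rw [this]
      exact (hTprop t ht).1.2
    have hw' : Tendsto (fun t => (starRingEnd ℂ) a * Complex.exp (γ' t) +
        (starRingEnd ℂ) b * Complex.exp (-(γ' t))) atTop (nhds ((starRingEnd ℂ) w)) := by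
      have hconj : ∀ t, (starRingEnd ℂ) a * Complex.exp (γ' t) +
          (starRingEnd ℂ) b * Complex.exp (-(γ' t)) =
          (starRingEnd ℂ) (a * Complex.exp (γ t) + b * Complex.exp (-(γ t))) := by
        intro t
        simp [hγ', map_add, map_mul, ← Complex.exp_conj, map_neg]
      simp only [hconj]
      exact (Complex.continuous_conj.tendsto w).comp hγw
    exact no_asymp_aux ((starRingEnd ℂ) a) ((starRingEnd ℂ) b) ((starRingEnd ℂ) w)
      (by simpa using ha) (by simpa using hb) γ' hγ'c M T hre' him' hw'
end

section
/- Let f : ℂ → ℂ be the entire map f(z) = π·sinh(z). Then the escaping set I(f) = {z ∈ ℂ : f^n(z) → ∞ as n → ∞} is nonempty and disconnected (it is not a preconnected subset of ℂ). Indeed, I(f) is disjoint from the imaginary axis, which separates the plane into two open half-planes each of which contains escaping points. -/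
open Complex Filter

/-- For `f(z) = π·sinh(z)`, the escaping set
`I(f) = {z : fⁿ(z) → ∞}` is nonempty and not preconnected; moreover `I(f)` is
disjoint from the imaginary axis and meets both open half-planes. -/
theorem pi_sinh_escaping_set_disconnected (f : ℂ → ℂ)
    (hf : ∀ z, f z = (Real.pi : ℂ) * Complex.sinh z)
    (I : Set ℂ)
    (hI : I = {z : ℂ | Tendsto (fun n : ℕ => ‖f^[n] z‖) atTop atTop}) :
    I.Nonempty ∧ ¬ IsPreconnected I ∧
    (∀ z ∈ I, z.re ≠ 0) ∧ (∃ z ∈ I, 0 < z.re) ∧ (∃ z ∈ I, z.re < 0) := by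
  have hπ3 : (3:ℝ) ≤ Real.pi := Real.pi_gt_three.le
  -- growth on positive reals
  have key : ∀ n : ℕ, ∃ x : ℝ, (3:ℝ)^n ≤ x ∧ f^[n] 1 = (x:ℂ) := by
    intro n
    induction n with
    | zero => exact ⟨1, by norm_num, by simp⟩
    | succ n ih =>
      obtain ⟨x, hx, hfx⟩ := ih
      have hx0 : (0:ℝ) ≤ x := le_trans (by positivity) hx
      refine ⟨Real.pi * Real.sinh x, ?_, ?_⟩
      · have h1 : x ≤ Real.sinh x := Real.self_le_sinh_iff.2 hx0
        calc (3:ℝ)^(n+1) = 3 * 3^n := by ring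
          _ ≤ Real.pi * Real.sinh x :=
              mul_le_mul hπ3 (le_trans hx h1) (by positivity) Real.pi_pos.le
      · rw [Function.iterate_succ_apply', hfx, hf]
        push_cast
        ring
  have h1I : (1:ℂ) ∈ I := by
    rw [hI]
    refine tendsto_atTop_mono ?_ (tendsto_pow_atTop_atTop_of_one_lt (by norm_num : (1:ℝ) < 3))
    intro n
    obtain ⟨x, hx, hfx⟩ := key n
    rw [hfx, Complex.norm_real, Real.norm_eq_abs, _root_.abs_of_nonneg (le_trans (by positivity) hx)]
    exact hx
  -- odd symmetry
  have hneg : ∀ n : ℕ, f^[n] (-1) = - f^[n] 1 := by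
    intro n
    induction n with
    | zero => simp
    | succ n ih =>
      rw [Function.iterate_succ_apply', Function.iterate_succ_apply', ih, hf, hf,
        Complex.sinh_neg, mul_neg]
  have hm1I : (-1:ℂ) ∈ I := by
    rw [hI]
    rw [hI] at h1I
    simpa only [Set.mem_setOf_eq, hneg, norm_neg] using h1I
  -- imaginary axis is invariant and bounded
  have haxis : ∀ z ∈ I, z.re ≠ 0 := by
    intro z hz hre
    rw [hI] at hz
    have hz' : z = (z.im : ℂ) * Complex.I := by
      apply Complex.ext <;> simp [hre]
    have him : ∀ n : ℕ, ∃ y : ℝ, f^[n] z = (y:ℂ) * Complex.I := by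
      intro n
      induction n with
      | zero => exact ⟨z.im, hz'⟩
      | succ n ih =>
        obtain ⟨y, hy⟩ := ih
        refine ⟨Real.pi * Real.sin y, ?_⟩
        rw [Function.iterate_succ_apply', hy, hf, Complex.sinh_mul_I]
        push_cast
        ring
    obtain ⟨n, hn, hn1⟩ := ((hz.eventually_gt_atTop Real.pi).and (eventually_ge_atTop 1)).exists
    obtain ⟨m, rfl⟩ : ∃ m, n = m + 1 := ⟨n - 1, by omega⟩
    obtain ⟨y, hy⟩ := him m
    have hb : ‖f^[m+1] z‖ ≤ Real.pi := by
      rw [Function.iterate_succ_apply', hy, hf, Complex.sinh_mul_I, ← Complex.ofReal_sin]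
      rw [norm_mul, norm_mul, Complex.norm_real, Complex.norm_real, Complex.norm_I, mul_one,
        Real.norm_eq_abs, Real.norm_eq_abs,
        _root_.abs_of_nonneg Real.pi_pos.le]
      calc Real.pi * |Real.sin y| ≤ Real.pi * 1 :=
            mul_le_mul_of_nonneg_left (Real.abs_sin_le_one y) Real.pi_pos.le
        _ = Real.pi := mul_one _
    exact absurd hn (not_lt.2 hb)
  refine ⟨⟨1, h1I⟩, ?_, haxis, ⟨1, h1I, by norm_num⟩, ⟨-1, hm1I, by norm_num⟩⟩
  intro hpc
  have hopen1 : IsOpen {z : ℂ | 0 < z.re} := isOpen_lt continuous_const Complex.continuous_re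
  have hopen2 : IsOpen {z : ℂ | z.re < 0} := isOpen_lt Complex.continuous_re continuous_const
  obtain ⟨w, -, hw1, hw2⟩ := hpc _ _ hopen1 hopen2
    (fun z hz => by
      rcases lt_or_gt_of_ne (haxis z hz) with h | h
      · exact Or.inr h
      · exact Or.inl h)
    ⟨1, h1I, by norm_num⟩ ⟨-1, hm1I, by norm_num⟩
  simp only [Set.mem_setOf_eq] at hw1 hw2
  linarith
end

section
/- Let f : ℂ → ℂ be any function and let a, b ∈ ℂ with a ≠ 0 such that f(cos z) = cos(a·z + b) for all z ∈ ℂ. Then a is an integer, b is an integer multiple of π, and f is a polynomial map: writing a = n ∈ ℤ and b = mπ with m ∈ ℤ, one has f(w) = (−1)^m · T_n(w) for all w ∈ ℂ, where T_n is the n-th Chebyshev polynomial (characterized by T_n(cos θ) = cos(nθ)). In particular, no transcendental entire function f can satisfy f(cos z) = cos(a·z + b) with a ≠ 0. -/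
open Complex

/-- If `f(cos z) = cos(a·z + b)` for all `z` with `a ≠ 0`, then `a` is an
integer `n`, `b` is an integer multiple `mπ` of `π`, and
`f = (-1)^m · T_n` with `T_n` the `n`-th Chebyshev polynomial. In particular
no transcendental entire function satisfies such an identity. -/
theorem cos_semiconjugacy_is_chebyshev (f : ℂ → ℂ) (a b : ℂ) (ha : a ≠ 0)
    (hf : ∀ z : ℂ, f (Complex.cos z) = Complex.cos (a * z + b)) :
    ∃ n m : ℤ, a = (n : ℂ) ∧ b = (m : ℂ) * (Real.pi : ℂ) ∧
      ∀ w : ℂ, f w = (-1 : ℂ) ^ m * (Polynomial.Chebyshev.T ℂ n).eval w := by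
  have pi_ne : (Real.pi : ℂ) ≠ 0 := by
    exact_mod_cast Real.pi_ne_zero
  -- b is an integer multiple of π
  have hsinb : Complex.sin b = 0 := by
    have h1 : ∀ z : ℂ, Complex.cos (a * z + b) = Complex.cos (-(a * z) + b) := by
      intro z
      have := hf z
      have h2 := hf (-z)
      rw [Complex.cos_neg] at h2
      rw [← this, h2]; ring_nf
    have key := h1 ((Real.pi / 2 : ℂ) / a)
    have haz : a * ((Real.pi / 2 : ℂ) / a) = (Real.pi / 2 : ℂ) := by
      field_simp
    rw [haz] at key
    have := Complex.cos_sub_cos ((Real.pi / 2 : ℂ) + b) (-(Real.pi / 2 : ℂ) + b)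
    rw [key] at this
    have h3 : ((Real.pi / 2 : ℂ) + b + (-(Real.pi / 2 : ℂ) + b)) / 2 = b := by ring
    have h4 : ((Real.pi / 2 : ℂ) + b - (-(Real.pi / 2 : ℂ) + b)) / 2 = (Real.pi / 2 : ℂ) := by
      ring
    rw [h3, h4, sub_self] at this
    have h5 : Complex.sin ((Real.pi / 2 : ℂ)) = 1 := by
      have : ((Real.pi / 2 : ℝ) : ℂ) = (Real.pi : ℂ) / 2 := by push_cast; ring
      rw [← this, ← Complex.ofReal_sin, Real.sin_pi_div_two, Complex.ofReal_one]
    rw [h5, mul_one] at this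
    have := this.symm
    rcases mul_eq_zero.1 this with h | h
    · norm_num at h
    · exact h
  obtain ⟨m, hm⟩ := Complex.sin_eq_zero_iff.1 hsinb
  -- a is an integer
  have hsina : Complex.sin ((Real.pi : ℂ) * a) = 0 := by
    have h1 : ∀ X : ℂ, Complex.cos (X + 2 * Real.pi * a) = Complex.cos X := by
      intro X
      have e1 := hf ((X - b) / a)
      have e2 := hf ((X - b) / a + 2 * Real.pi)
      rw [Complex.cos_add_two_pi] at e2
      have ha1 : a * ((X - b) / a) + b = X := by field_simp; ring
      have ha2 : a * ((X - b) / a + 2 * Real.pi) + b = X + 2 * Real.pi * a := by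
        field_simp; ring
      rw [ha1] at e1
      rw [ha2] at e2
      rw [← e1, ← e2]
    have key := h1 ((Real.pi / 2 : ℂ) - Real.pi * a)
    have := Complex.cos_sub_cos ((Real.pi / 2 : ℂ) - Real.pi * a + 2 * Real.pi * a)
      ((Real.pi / 2 : ℂ) - Real.pi * a)
    rw [key, sub_self] at this
    have h3 : (((Real.pi / 2 : ℂ) - Real.pi * a + 2 * Real.pi * a) +
        ((Real.pi / 2 : ℂ) - Real.pi * a)) / 2 = (Real.pi / 2 : ℂ) := by ring
    have h4 : (((Real.pi / 2 : ℂ) - Real.pi * a + 2 * Real.pi * a) -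
        ((Real.pi / 2 : ℂ) - Real.pi * a)) / 2 = (Real.pi : ℂ) * a := by ring
    rw [h3, h4] at this
    have h5 : Complex.sin ((Real.pi / 2 : ℂ)) = 1 := by
      have : ((Real.pi / 2 : ℝ) : ℂ) = (Real.pi : ℂ) / 2 := by push_cast; ring
      rw [← this, ← Complex.ofReal_sin, Real.sin_pi_div_two, Complex.ofReal_one]
    rw [h5, mul_one] at this
    rcases mul_eq_zero.1 this.symm with h | h
    · norm_num at h
    · exact h
  obtain ⟨n, hn⟩ := Complex.sin_eq_zero_iff.1 hsina
  have han : a = (n : ℂ) := by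
    have : (Real.pi : ℂ) * a = (Real.pi : ℂ) * n := by rw [hn]; ring
    exact mul_left_cancel₀ pi_ne this
  refine ⟨n, m, han, hm, ?_⟩
  intro w
  obtain ⟨z, rfl⟩ := Complex.cos_surjective w
  rw [hf, Polynomial.Chebyshev.T_complex_cos, han, hm, Complex.cos_add]
  have hc : Complex.cos ((m : ℂ) * Real.pi) = (-1 : ℂ) ^ m := by
    have : ((m : ℂ) * Real.pi) = (((m : ℝ) * Real.pi : ℝ) : ℂ) := by push_cast; ring
    rw [this, ← Complex.ofReal_cos]
    have := Real.cos_int_mul_pi_sub 0 m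
    simp only [sub_zero, Real.cos_zero, mul_one] at this
    rw [this]; push_cast; ring
  have hs : Complex.sin ((m : ℂ) * Real.pi) = 0 := by
    have : ((m : ℂ) * Real.pi) = (((m : ℝ) * Real.pi : ℝ) : ℂ) := by push_cast; ring
    rw [this, ← Complex.ofReal_sin, Real.sin_int_mul_pi, Complex.ofReal_zero]
  rw [hc, hs, mul_zero, sub_zero, mul_comm]
end

section
/- Let Φ : ℂ → ℂ be an entire function, let λ ∈ ℂ, and suppose Φ(λ·z) = Φ(z)² − 1 for all z ∈ ℂ (i.e., Φ semiconjugates multiplication by λ to the polynomial p(z) = z² − 1). Suppose there exists z̃ ∈ ℂ with Φ(z̃) = 0 and Φ′(z̃) = 0. Then for every n ≥ 1 and every k with 1 ≤ k ≤ n, the k-th derivative of Φ vanishes at the point λ^n·z̃: Φ^{(k)}(λ^n·z̃) = 0. In particular, the local degree of Φ at λ^n·z̃ is at least n + 1, so Φ has points in ℂ of arbitrarily large local degree. -/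
open Complex Finset

/-- Pascal-style reindexing identity used in the Leibniz rule. -/
private lemma sum_pascal (U V : ℕ → ℂ) (k : ℕ) :
    ∑ j ∈ Finset.range (k + 1),
        (k.choose j : ℂ) * (U (j + 1) * V (k - j) + U j * V (k - j + 1)) =
      ∑ j ∈ Finset.range (k + 2), ((k + 1).choose j : ℂ) * (U j * V (k + 1 - j)) := by
  have hR := Finset.sum_range_succ'
    (fun j => ((k + 1).choose j : ℂ) * (U j * V (k + 1 - j))) (k + 1)
  have hS := Finset.sum_range_succ'
    (fun j => ((k).choose j : ℂ) * (U j * V (k + 1 - j))) (k + 1)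
  have hlast := Finset.sum_range_succ
    (fun j => ((k).choose j : ℂ) * (U j * V (k + 1 - j))) (k + 1)
  simp only [mul_add, Finset.sum_add_distrib]
  rw [hR]
  have h1 : ∀ i ∈ Finset.range (k + 1),
      ((k + 1).choose (i + 1) : ℂ) * (U (i + 1) * V (k + 1 - (i + 1)))
        = (k.choose i : ℂ) * (U (i + 1) * V (k - i))
          + (k.choose (i + 1) : ℂ) * (U (i + 1) * V (k + 1 - (i + 1))) := by
    intro i hi
    have : ((k + 1).choose (i + 1) : ℂ) = (k.choose i : ℂ) + (k.choose (i + 1) : ℂ) := by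
      exact_mod_cast Nat.choose_succ_succ k i
    rw [Finset.mem_range] at hi
    have hsub : k + 1 - (i + 1) = k - i := by omega
    rw [this, add_mul, hsub]
  rw [Finset.sum_congr rfl h1, Finset.sum_add_distrib]
  have h2 : ∑ j ∈ Finset.range (k + 1), (k.choose j : ℂ) * (U j * V (k - j + 1))
      = ∑ i ∈ Finset.range (k + 1),
          (k.choose (i + 1) : ℂ) * (U (i + 1) * V (k + 1 - (i + 1)))
        + ((k + 1).choose 0 : ℂ) * (U 0 * V (k + 1 - 0)) := by
    have hc0 : ((k + 1).choose 0 : ℂ) = ((k).choose 0 : ℂ) := by simp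
    rw [hc0, ← hS, hlast]
    have hz : ((k).choose (k + 1) : ℂ) = 0 := by
      exact_mod_cast Nat.choose_eq_zero_of_lt (Nat.lt_succ_self k)
    rw [hz, zero_mul, add_zero]
    apply Finset.sum_congr rfl
    intro j hj
    rw [Finset.mem_range] at hj
    have : k + 1 - j = k - j + 1 := by omega
    rw [this]
  rw [h2]
  ring

/-- Leibniz rule for iterated derivatives of a product of entire functions. -/
private lemma leibniz_iteratedDeriv {f g : ℂ → ℂ} (hf : Differentiable ℂ f)
    (hg : Differentiable ℂ g) (k : ℕ) :
    iteratedDeriv k (fun z => f z * g z) = fun x =>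
      ∑ j ∈ Finset.range (k + 1),
        (k.choose j : ℂ) * (iteratedDeriv j f x * iteratedDeriv (k - j) g x) := by
  have hdf : ∀ j : ℕ, Differentiable ℂ (iteratedDeriv j f) := fun j =>
    (hf.contDiff (n := (⊤ : WithTop ℕ∞))).differentiable_iteratedDeriv j
      (by exact_mod_cast lt_of_lt_of_le (WithTop.coe_lt_top _) le_rfl)
  have hdg : ∀ j : ℕ, Differentiable ℂ (iteratedDeriv j g) := fun j =>
    (hg.contDiff (n := (⊤ : WithTop ℕ∞))).differentiable_iteratedDeriv j
      (by exact_mod_cast lt_of_lt_of_le (WithTop.coe_lt_top _) le_rfl)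
  induction k with
  | zero => funext x; simp
  | succ k ih =>
    funext x
    rw [iteratedDeriv_succ, ih]
    have hterm : ∀ j ∈ Finset.range (k + 1), DifferentiableAt ℂ
        (fun x => (k.choose j : ℂ) * (iteratedDeriv j f x * iteratedDeriv (k - j) g x)) x :=
      fun j _ => (((hdf j).differentiableAt.mul (hdg (k - j)).differentiableAt).const_mul _)
    rw [deriv_fun_sum hterm]
    have hstep : ∀ j ∈ Finset.range (k + 1),
        deriv (fun x => (k.choose j : ℂ) *
            (iteratedDeriv j f x * iteratedDeriv (k - j) g x)) x
          = (k.choose j : ℂ) * (iteratedDeriv (j + 1) f x * iteratedDeriv (k - j) g x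
              + iteratedDeriv j f x * iteratedDeriv (k - j + 1) g x) := by
      intro j _
      rw [deriv_const_mul (d := fun y => iteratedDeriv j f y * iteratedDeriv (k - j) g y) _ ((hdf j).differentiableAt.mul (hdg (k - j)).differentiableAt),
        deriv_fun_mul (hdf j).differentiableAt (hdg (k - j)).differentiableAt,
        ← iteratedDeriv_succ, ← iteratedDeriv_succ]
    rw [Finset.sum_congr rfl hstep]
    exact sum_pascal (fun j => iteratedDeriv j f x) (fun j => iteratedDeriv j g x) k

/-- Let `Φ` be entire with `Φ(λ·z) = Φ(z)² − 1`, and suppose `Φ(z̃) = 0` and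
`Φ′(z̃) = 0`. Then for every `n ≥ 1` and every `1 ≤ k ≤ n`, the `k`-th
derivative of `Φ` vanishes at `λⁿ·z̃`; hence the local degree of `Φ` at
`λⁿ·z̃` is at least `n + 1`. -/
theorem poincare_function_unbounded_local_degree (Φ : ℂ → ℂ)
    (hdiff : Differentiable ℂ Φ) (lam : ℂ)
    (hfun : ∀ z : ℂ, Φ (lam * z) = (Φ z) ^ 2 - 1)
    (zt : ℂ) (hz : Φ zt = 0) (hz' : deriv Φ zt = 0) :
    ∀ n k : ℕ, 1 ≤ n → 1 ≤ k → k ≤ n → iteratedDeriv k Φ (lam ^ n * zt) = 0 := by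
  -- λ ≠ 0
  have hlam : lam ≠ 0 := by
    intro h
    have h1 : Φ 0 = -1 := by
      have := hfun zt
      rw [h, zero_mul, hz] at this
      simpa using this
    have h2 := hfun 0
    rw [h, zero_mul, h1] at h2
    norm_num at h2
  -- values of Φ along the orbit
  have hval : ∀ n : ℕ, Φ (lam ^ n * zt) = if Even n then 0 else -1 := by
    intro n
    induction n with
    | zero => simpa using hz
    | succ n ih =>
      have hpt : lam ^ (n + 1) * zt = lam * (lam ^ n * zt) := by ring
      rw [hpt, hfun, ih]
      rcases Nat.even_or_odd n with he | ho
      · simp [he, Nat.even_add_one, he]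
      · have : ¬ Even n := by simpa using ho
        simp [this, Nat.even_add_one]
  -- the bound function
  let c : ℕ → ℕ := fun n => Nat.rec 1 (fun m cm => if Even m then 2 * cm + 1 else cm) n
  have hc0 : c 0 = 1 := rfl
  have hcs : ∀ n, c (n + 1) = if Even n then 2 * c n + 1 else c n := fun n => rfl
  have hcge : ∀ n, n + 1 ≤ c n ∧ (¬ Even n → n + 2 ≤ c n) := by
    intro n
    induction n with
    | zero => constructor <;> simp [hc0]
    | succ n ih =>
      rcases Nat.even_or_odd n with he | ho
      · have h1 : c (n + 1) = 2 * c n + 1 := by rw [hcs]; simp [he]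
        exact ⟨by omega, fun _ => by omega⟩
      · have hne : ¬ Even n := by simpa using ho
        have h1 : c (n + 1) = c n := by rw [hcs]; simp [hne]
        have h2 := ih.2 hne
        have : Even (n + 1) := Nat.even_add_one.mpr hne
        constructor
        · omega
        · intro h; exact absurd this h
  -- main induction
  have main : ∀ n, ∀ k, 1 ≤ k → k ≤ c n → iteratedDeriv k Φ (lam ^ n * zt) = 0 := by
    intro n
    induction n with
    | zero =>
      intro k hk1 hk2
      rw [hc0] at hk2
      have : k = 1 := le_antisymm hk2 hk1
      subst this
      simpa [iteratedDeriv_one] using hz'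
    | succ n ih =>
      intro k hk1 hk2
      -- the function z ↦ Φ (lam * z) rewritten as a product minus a constant
      have heq : (fun z => Φ (lam * z)) = fun z => Φ z * Φ z - 1 := by
        funext z; rw [hfun]; ring
      -- iterated derivative of the composition with scaling
      have hscale := iteratedDeriv_comp_const_mul
        (hdiff.contDiff (n := (k : WithTop ℕ∞))) lam (f := Φ)
      have hpt : lam * (lam ^ n * zt) = lam ^ (n + 1) * zt := by ring
      have key : lam ^ k * iteratedDeriv k Φ (lam ^ (n + 1) * zt)
          = iteratedDeriv k (fun z => Φ (lam * z)) (lam ^ n * zt) := by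
        rw [hscale]
        simp only [hpt]
      -- drop the constant −1
      obtain ⟨k', rfl⟩ : ∃ k', k = k' + 1 := ⟨k - 1, by omega⟩
      have hsub : iteratedDeriv (k' + 1) (fun z => Φ z * Φ z - 1)
          = iteratedDeriv (k' + 1) (fun z => Φ z * Φ z) := by
        have hd : deriv (fun z => Φ z * Φ z - 1) = deriv (fun z => Φ z * Φ z) := by
          funext x
          exact deriv_sub_const (1 : ℂ)
        rw [iteratedDeriv_succ', iteratedDeriv_succ', hd]
      -- Leibniz expansion
      have hleib := leibniz_iteratedDeriv hdiff hdiff (k' + 1)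
      set w := lam ^ n * zt with hw
      have hterms : ∀ j ∈ Finset.range (k' + 1 + 1),
          ((k' + 1).choose j : ℂ) * (iteratedDeriv j Φ w * iteratedDeriv (k' + 1 - j) Φ w)
            = 0 := by
        intro j hj
        rw [Finset.mem_range] at hj
        rcases eq_or_ne j 0 with rfl | hj0
        · -- term Φ w * iteratedDeriv (k'+1) Φ w
          simp only [iteratedDeriv_zero, Nat.sub_zero]
          rcases Nat.even_or_odd n with he | ho
          · rw [hval n, if_pos he]; ring
          · have hne : ¬ Even n := by simpa using ho
            have hcn : c (n + 1) = c n := by rw [hcs]; simp [hne]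
            have : iteratedDeriv (k' + 1) Φ w = 0 :=
              ih (k' + 1) (by omega) (by omega)
            rw [this]; ring
        rcases eq_or_ne j (k' + 1) with rfl | hjk
        · simp only [Nat.sub_self, iteratedDeriv_zero]
          rcases Nat.even_or_odd n with he | ho
          · rw [hval n, if_pos he]; ring
          · have hne : ¬ Even n := by simpa using ho
            have hcn : c (n + 1) = c n := by rw [hcs]; simp [hne]
            have : iteratedDeriv (k' + 1) Φ w = 0 :=
              ih (k' + 1) (by omega) (by omega)
            rw [this]; ring
        · -- 1 ≤ j ≤ k', both factors are genuine derivatives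
          have hccn : c (n + 1) ≤ 2 * c n + 1 := by
            rw [hcs]; rcases Nat.even_or_odd n with he | ho
            · simp [he]
            · have hne : ¬ Even n := by simpa using ho
              simp [hne]; omega
          have hmin : j ≤ c n ∨ k' + 1 - j ≤ c n := by omega
          rcases hmin with h | h
          · have : iteratedDeriv j Φ w = 0 := ih j (by omega) h
            rw [this]; ring
          · have : iteratedDeriv (k' + 1 - j) Φ w = 0 := ih (k' + 1 - j) (by omega) h
            rw [this]; ring
      have hzero : iteratedDeriv (k' + 1) (fun z => Φ (lam * z)) w = 0 := by
        rw [heq, hsub, hleib]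
        exact Finset.sum_eq_zero hterms
      have : lam ^ (k' + 1) * iteratedDeriv (k' + 1) Φ (lam ^ (n + 1) * zt) = 0 := by
        rw [key, hzero]
      have hlk : lam ^ (k' + 1) ≠ 0 := pow_ne_zero _ hlam
      exact (mul_eq_zero.mp this).resolve_left hlk
  intro n k hn hk1 hkn
  exact main n k hk1 (le_trans hkn (by have := (hcge n).1; omega))
end

section
/- For every z ∈ ℂ, the inequality |(1 − e^z)^{1/2}| · |1 − (1 − e^z)^{1/2}| ≤ √2 · |e^z| holds, where w^{1/2} denotes the principal branch of the square root (so that Re(w^{1/2}) ≥ 0). -/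
open Complex

lemma re_cpow_half_nonneg (w : ℂ) : 0 ≤ (w ^ ((1 : ℂ) / 2)).re := by
  rcases eq_or_ne w 0 with h | h
  · simp [h, Complex.zero_cpow (by norm_num : (1:ℂ)/2 ≠ 0)]
  · rw [Complex.cpow_def_of_ne_zero h, Complex.exp_re]
    apply mul_nonneg (Real.exp_pos _).le
    apply Real.cos_nonneg_of_mem_Icc
    constructor
    · have := Complex.neg_pi_lt_arg w
      have him : (Complex.log w * ((1:ℂ)/2)).im = w.arg / 2 := by
        simp [Complex.log_im, Complex.mul_im, Complex.log_re]
        ring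
      rw [him]
      linarith
    · have := Complex.arg_le_pi w
      have him : (Complex.log w * ((1:ℂ)/2)).im = w.arg / 2 := by
        simp [Complex.log_im, Complex.mul_im, Complex.log_re]
        ring
      rw [him]
      linarith

/-- For every `z ∈ ℂ`, `|√(1 − e^z)| · |1 − √(1 − e^z)| ≤ √2 · |e^z|`, where
`√` denotes the principal branch of the square root. -/
theorem sqrt_one_sub_exp_estimate :
    ∀ z : ℂ,
      ‖(1 - Complex.exp z) ^ ((1 : ℂ) / 2)‖ *
        ‖1 - (1 - Complex.exp z) ^ ((1 : ℂ) / 2)‖ ≤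
      Real.sqrt 2 * ‖Complex.exp z‖ := by
  intro z
  set s : ℂ := (1 - Complex.exp z) ^ ((1 : ℂ) / 2) with hs
  have hre : 0 ≤ s.re := re_cpow_half_nonneg _
  have hsq : s ^ 2 = 1 - Complex.exp z := by
    rw [hs]
    have : ((1:ℂ)/2) = ((2:ℕ):ℂ)⁻¹ := by norm_num
    rw [this, Complex.cpow_nat_inv_pow _ (by norm_num)]
  have hexp : Complex.exp z = (1 - s) * (1 + s) := by
    have : Complex.exp z = 1 - s ^ 2 := by rw [hsq]; ring
    rw [this]; ring
  have habs : ‖Complex.exp z‖ = ‖1 - s‖ * ‖1 + s‖ := by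
    rw [hexp, norm_mul]
  have hle : ‖s‖ ≤ ‖1 + s‖ := by
    rw [Complex.norm_def, Complex.norm_def]
    apply Real.sqrt_le_sqrt
    rw [Complex.normSq_apply, Complex.normSq_apply]
    simp only [Complex.add_re, Complex.add_im, Complex.one_re, Complex.one_im]
    nlinarith
  calc ‖s‖ * ‖1 - s‖
      ≤ ‖1 + s‖ * ‖1 - s‖ :=
        mul_le_mul_of_nonneg_right hle (norm_nonneg _)
    _ = ‖Complex.exp z‖ := by rw [habs]; ring
    _ ≤ Real.sqrt 2 * ‖Complex.exp z‖ := by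
        nlinarith [Real.one_le_sqrt.mpr (by norm_num : (1:ℝ) ≤ 2), norm_nonneg (Complex.exp z)]
end
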